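/- Let F be a commutative ring, A an m×n matrix and B a p×q matrix over F. Then (A ⋉ B)ᵀ = Bᵀ ⋉ Aᵀ, where ᵀ denotes matrix transpose (both sides being matrices of the same dimensions, identified via the canonical reindexing of index types). -/
import Mathlib


open Matrix Kronecker

/-- The semi-tensor product (STP) of matrices: for `A : F^{m×n}` and `B : F^{p×q}`,
with `t = lcm n p`, `A ⋉ B := (A ⊗ I_{t/n}) * (B ⊗ I_{t/p})`, where the factors are
multiplied after the canonical identifications
`Fin n × Fin (t/n) ≃ Fin t ≃ Fin p × Fin (t/p)` of index types. -/
def stp {F : Type*} [CommRing F] {m n p q : ℕ}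
    (A : Matrix (Fin m) (Fin n) F) (B : Matrix (Fin p) (Fin q) F) :
    Matrix (Fin (m * (Nat.lcm n p / n))) (Fin (q * (Nat.lcm n p / p))) F :=
  (Matrix.reindex finProdFinEquiv
      (finProdFinEquiv.trans (finCongr (Nat.mul_div_cancel' (Nat.dvd_lcm_left n p))))
      (A ⊗ₖ (1 : Matrix (Fin (Nat.lcm n p / n)) (Fin (Nat.lcm n p / n)) F))) *
  (Matrix.reindex
      (finProdFinEquiv.trans (finCongr (Nat.mul_div_cancel' (Nat.dvd_lcm_right n p))))
      finProdFinEquiv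
      (B ⊗ₖ (1 : Matrix (Fin (Nat.lcm n p / p)) (Fin (Nat.lcm n p / p)) F)))

/-- `(A ⋉ B)ᵀ = Bᵀ ⋉ Aᵀ`, both sides identified via the canonical reindexing
(`finCongr`) of their (numerically equal) dimensions. -/
theorem stp_transpose {F : Type*} [CommRing F] {m n p q : ℕ}
    (A : Matrix (Fin m) (Fin n) F) (B : Matrix (Fin p) (Fin q) F) :
    ∃ (h₁ : q * (Nat.lcm p n / p) = q * (Nat.lcm n p / p))
      (h₂ : m * (Nat.lcm p n / n) = m * (Nat.lcm n p / n)),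
      (stp A B)ᵀ = Matrix.reindex (finCongr h₁) (finCongr h₂) (stp Bᵀ Aᵀ) := by
  have H : Nat.lcm p n = Nat.lcm n p := Nat.lcm_comm p n
  refine ⟨by rw [H], by rw [H], ?_⟩
  ext i j
  simp only [stp, transpose_apply, mul_apply, reindex_apply, submatrix_apply,
    Equiv.symm_trans_apply, finCongr_symm, finCongr_apply, finProdFinEquiv_symm_apply,
    kroneckerMap_apply, Matrix.one_apply]
  rw [← Equiv.sum_comp (finCongr H)]
  refine Finset.sum_congr rfl fun k _ => ?_
  simp only [finCongr_apply, transpose_apply, Fin.divNat, Fin.modNat, Fin.coe_cast, H]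
  rw [mul_comm]
  congr 1 <;> · congr 1; split_ifs with h1 h2 <;> simp_all [Fin.ext_iff]
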